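/- arXiv:1501.01126 — 3 statements merged into one kernel-verified Lean document; each statement's English description precedes it below -/
import Mathlib

section
/- For an integrable random variable X and δ ∈ (0,1), CVaR_δ(X) equals the optimal value of the convex minimization problem min_{α∈R} [ α + (1/(1-δ)) E[(X - α)⁺] ], and the infimum is attained at α = VaR_δ(X). -/
open MeasureTheory Set
open scoped ENNReal

/-- `VaR_δ(X) = inf {t : P(X ≥ t) ≤ 1 - δ}`. -/
noncomputable def VaR {Ω : Type*} [MeasurableSpace Ω] (P : Measure Ω) (δ : ℝ)
    (X : Ω → ℝ) : ℝ :=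
  sInf {t : ℝ | P {ω | t ≤ X ω} ≤ ENNReal.ofReal (1 - δ)}

/-- `CVaR_δ(X) = (1/(1-δ)) ∫_δ^1 VaR_s(X) ds`. -/
noncomputable def CVaR {Ω : Type*} [MeasurableSpace Ω] (P : Measure Ω) (δ : ℝ)
    (X : Ω → ℝ) : ℝ :=
  (1 - δ)⁻¹ * ∫ s in Set.Ioc δ 1, VaR P s X

/-- Rockafellar–Uryasev: `CVaR_δ(X)` equals the optimal value of
`min_α [α + (1/(1-δ)) E[(X-α)⁺]]`, and the minimum is attained at `α = VaR_δ(X)`. -/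
theorem CVaR_eq_rockafellar_uryasev {Ω : Type*} [MeasurableSpace Ω] (P : Measure Ω)
    [IsProbabilityMeasure P] (X : Ω → ℝ) (hX : Integrable X P) (hXm : Measurable X)
    (δ : ℝ) (hδ : δ ∈ Set.Ioo (0 : ℝ) 1) :
    (∀ α : ℝ, CVaR P δ X ≤ α + (1 - δ)⁻¹ * ∫ ω, max (X ω - α) 0 ∂P) ∧
      VaR P δ X + (1 - δ)⁻¹ * (∫ ω, max (X ω - VaR P δ X) 0 ∂P) = CVaR P δ X := by
  obtain ⟨hδ0, hδ1⟩ := hδ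
  have h1δ : (1 : ℝ) - δ ≠ 0 := by linarith
  -- Notation: `G t = P {X ≥ t}` and the VaR defining sets
  have hS : ∀ s : ℝ, VaR P s X = sInf {t : ℝ | P {ω | t ≤ X ω} ≤ ENNReal.ofReal (1 - s)} :=
    fun _ => rfl
  have hGanti : ∀ {t t' : ℝ}, t ≤ t' → P {ω | t' ≤ X ω} ≤ P {ω | t ≤ X ω} :=
    fun h => measure_mono (fun ω hω => le_trans h hω)
  have hGtop : ∀ t : ℝ, P {ω | t ≤ X ω} ≠ ⊤ := fun _ => measure_ne_top P _
  -- nonemptiness of the VaR sets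
  have hne : ∀ s : ℝ, s < 1 →
      ({t : ℝ | P {ω | t ≤ X ω} ≤ ENNReal.ofReal (1 - s)}).Nonempty := by
    intro s hs
    have h1 : Filter.Tendsto (fun n : ℕ => P {ω | (n : ℝ) ≤ X ω}) Filter.atTop
        (nhds (P (⋂ n : ℕ, {ω | (n : ℝ) ≤ X ω}))) := by
      apply tendsto_measure_iInter_atTop
      · exact fun n => (hXm measurableSet_Ici).nullMeasurableSet
      · intro n m hnm ω hω
        simp only [mem_setOf_eq] at hω ⊢
        exact le_trans (Nat.cast_le.mpr hnm) hω
      · exact ⟨0, measure_ne_top _ _⟩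
    have h2 : (⋂ n : ℕ, {ω | (n : ℝ) ≤ X ω}) = ∅ := by
      ext ω
      simp only [mem_iInter, mem_setOf_eq, mem_empty_iff_false, iff_false, not_forall, not_le]
      obtain ⟨n, hn⟩ := exists_nat_gt (X ω)
      exact ⟨n, hn⟩
    rw [h2, measure_empty] at h1
    have hpos : (0 : ℝ≥0∞) < ENNReal.ofReal (1 - s) := ENNReal.ofReal_pos.mpr (by linarith)
    obtain ⟨n, hn⟩ := (h1.eventually_lt_const hpos).exists
    exact ⟨n, hn.le⟩
  -- lower bound for the VaR sets
  obtain ⟨t₀, ht₀⟩ : ∃ t₀ : ℝ, ENNReal.ofReal (1 - δ) < P {ω | t₀ ≤ X ω} := by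
    have h1 : Filter.Tendsto (fun n : ℕ => P {ω | -(n : ℝ) ≤ X ω}) Filter.atTop
        (nhds (P (⋃ n : ℕ, {ω | -(n : ℝ) ≤ X ω}))) :=
      tendsto_measure_iUnion_atTop (fun n m hnm ω hω => by
        simp only [mem_setOf_eq] at hω ⊢
        exact le_trans (neg_le_neg (Nat.cast_le.mpr hnm)) hω)
    have h2 : (⋃ n : ℕ, {ω | -(n : ℝ) ≤ X ω}) = univ := by
      ext ω
      simp only [mem_iUnion, mem_setOf_eq, mem_univ, iff_true]
      obtain ⟨n, hn⟩ := exists_nat_gt (-(X ω))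
      exact ⟨n, by linarith⟩
    rw [h2, measure_univ] at h1
    have hlt : ENNReal.ofReal (1 - δ) < 1 := ENNReal.ofReal_lt_one.mpr (by linarith)
    obtain ⟨n, hn⟩ := (h1.eventually_const_lt hlt).exists
    exact ⟨-(n : ℝ), hn⟩
  have hlb : ∀ s : ℝ, δ ≤ s →
      t₀ ∈ lowerBounds {t : ℝ | P {ω | t ≤ X ω} ≤ ENNReal.ofReal (1 - s)} := by
    intro s hδs u hu
    by_contra hc
    push_neg at hc
    have h1 : P {ω | t₀ ≤ X ω} ≤ ENNReal.ofReal (1 - δ) :=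
      le_trans (le_trans (hGanti hc.le) hu) (ENNReal.ofReal_le_ofReal (by linarith))
    exact absurd h1 (not_le.mpr ht₀)
  have hbdd : ∀ s : ℝ, δ ≤ s →
      BddBelow {t : ℝ | P {ω | t ≤ X ω} ≤ ENNReal.ofReal (1 - s)} :=
    fun s h => ⟨t₀, hlb s h⟩
  -- monotonicity of VaR
  have hq_mono : ∀ ⦃s s' : ℝ⦄, δ ≤ s → s ≤ s' → s' < 1 → VaR P s X ≤ VaR P s' X := by
    intro s s' h1 h2 h3
    rw [hS, hS]
    exact csInf_le_csInf (hbdd s h1) (hne s' h3)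
      (fun t ht => le_trans ht (ENNReal.ofReal_le_ofReal (by linarith)))
  -- the tail probability is small beyond `VaR δ`
  have hqd_lt : ∀ t : ℝ, VaR P δ X < t → P {ω | t ≤ X ω} ≤ ENNReal.ofReal (1 - δ) := by
    intro t ht
    rw [hS] at ht
    obtain ⟨u, huS, hut⟩ := (csInf_lt_iff (hbdd δ le_rfl) (hne δ hδ1)).mp ht
    exact le_trans (hGanti hut.le) huS
  have hL1 : ∀ s ∈ Ioo δ (1 : ℝ), ∀ t : ℝ, t < VaR P s X →
      ENNReal.ofReal (1 - s) < P {ω | t ≤ X ω} := by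
    intro s hs t ht
    by_contra hc
    push_neg at hc
    rw [hS] at ht
    exact absurd (csInf_le (hbdd s hs.1.le) hc) (not_le.mpr ht)
  have hL2 : ∀ s ∈ Ioo δ (1 : ℝ), ∀ c : ℝ,
      ENNReal.ofReal (1 - s) < P {ω | c ≤ X ω} → c ≤ VaR P s X := by
    intro s hs c hc
    rw [hS]
    refine le_csInf (hne s hs.2) (fun u hu => ?_)
    by_contra h
    push_neg at h
    exact absurd (le_trans (hGanti h.le) hu) (not_le.mpr hc)
  -- volume upper bound
  have hvol_le : ∀ t : ℝ,
      volume ({s : ℝ | t < VaR P s X} ∩ Ioo δ 1) ≤ P {ω | t ≤ X ω} := by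
    intro t
    have hsub : {s : ℝ | t < VaR P s X} ∩ Ioo δ 1 ⊆
        Ioo (1 - (P {ω | t ≤ X ω}).toReal) 1 := by
      rintro s ⟨hts, hs⟩
      refine ⟨?_, hs.2⟩
      have h2 : 1 - s < (P {ω | t ≤ X ω}).toReal :=
        (ENNReal.ofReal_lt_iff_lt_toReal (by linarith [hs.2]) (hGtop t)).mp (hL1 s hs t hts)
      linarith
    calc volume ({s : ℝ | t < VaR P s X} ∩ Ioo δ 1)
        ≤ volume (Ioo (1 - (P {ω | t ≤ X ω}).toReal) 1) := measure_mono hsub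
      _ = ENNReal.ofReal (1 - (1 - (P {ω | t ≤ X ω}).toReal)) := Real.volume_Ioo
      _ = ENNReal.ofReal ((P {ω | t ≤ X ω}).toReal) := by rw [sub_sub_cancel]
      _ = P {ω | t ≤ X ω} := ENNReal.ofReal_toReal (hGtop t)
  -- volume lower bound
  have hvol_ge : ∀ t : ℝ, VaR P δ X < t →
      P {ω | t < X ω} ≤ volume ({s : ℝ | t < VaR P s X} ∩ Ioo δ 1) := by
    intro t ht
    have hU : {ω | t < X ω} = ⋃ n : ℕ, {ω | t + 1 / ((n : ℝ) + 1) ≤ X ω} := by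
      ext ω
      simp only [mem_setOf_eq, mem_iUnion]
      constructor
      · intro h
        obtain ⟨n, hn⟩ := exists_nat_one_div_lt (sub_pos.mpr h)
        exact ⟨n, by push_cast at hn ⊢; linarith⟩
      · rintro ⟨n, hn⟩
        have hp : (0 : ℝ) < 1 / ((n : ℝ) + 1) := by positivity
        linarith
    have hmon : Monotone (fun n : ℕ => {ω | t + 1 / ((n : ℝ) + 1) ≤ X ω}) := by
      intro n m hnm ω hω
      simp only [mem_setOf_eq] at hω ⊢
      have hc : (n : ℝ) ≤ (m : ℝ) := Nat.cast_le.mpr hnm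
      have h1 : 1 / ((m : ℝ) + 1) ≤ 1 / ((n : ℝ) + 1) :=
        one_div_le_one_div_of_le (by positivity) (by linarith)
      linarith
    rw [hU, hmon.directed_le.measure_iUnion]
    refine iSup_le fun n => ?_
    set c : ℝ := t + 1 / ((n : ℝ) + 1) with hcdef
    have hct : t < c := by
      have hp : (0 : ℝ) < 1 / ((n : ℝ) + 1) := by positivity
      simp only [hcdef]; linarith
    have hGc : P {ω | c ≤ X ω} ≤ ENNReal.ofReal (1 - δ) := hqd_lt c (ht.trans hct)
    have htR : (P {ω | c ≤ X ω}).toReal ≤ 1 - δ :=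
      ENNReal.toReal_le_of_le_ofReal (by linarith) hGc
    have hsub : Ioo (1 - (P {ω | c ≤ X ω}).toReal) 1 ⊆
        {s : ℝ | t < VaR P s X} ∩ Ioo δ 1 := by
      intro s hs
      have hsIoo : s ∈ Ioo δ (1 : ℝ) := ⟨by linarith [hs.1], hs.2⟩
      have h1 : ENNReal.ofReal (1 - s) < P {ω | c ≤ X ω} := by
        rw [ENNReal.ofReal_lt_iff_lt_toReal (by linarith [hs.2]) (hGtop c)]
        linarith [hs.1]
      exact ⟨lt_of_lt_of_le hct (hL2 s hsIoo c h1), hsIoo⟩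
    calc P {ω | c ≤ X ω} = ENNReal.ofReal ((P {ω | c ≤ X ω}).toReal) :=
          (ENNReal.ofReal_toReal (hGtop c)).symm
      _ = ENNReal.ofReal (1 - (1 - (P {ω | c ≤ X ω}).toReal)) := by rw [sub_sub_cancel]
      _ = volume (Ioo (1 - (P {ω | c ≤ X ω}).toReal) 1) := Real.volume_Ioo.symm
      _ ≤ volume ({s : ℝ | t < VaR P s X} ∩ Ioo δ 1) := measure_mono hsub
  -- measurability of VaR in s
  have hqmonoOn : MonotoneOn (fun s => VaR P s X) (Ioo δ 1) :=
    fun s hs s' hs' hss' => hq_mono hs.1.le hss' hs'.2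
  have hq_ae : AEMeasurable (fun s => VaR P s X) (volume.restrict (Ioo δ 1)) :=
    aemeasurable_restrict_of_monotoneOn measurableSet_Ioo hqmonoOn
  -- layer cake for VaR
  have hA : ∀ c : ℝ,
      ∫⁻ s in Ioo δ 1, ENNReal.ofReal (max (VaR P s X - c) 0) =
        ∫⁻ t in Ioi (0 : ℝ), volume ({s : ℝ | c + t < VaR P s X} ∩ Ioo δ 1) := by
    intro c
    have hlc := lintegral_eq_lintegral_meas_lt (f := fun s => max (VaR P s X - c) 0)
      (volume.restrict (Ioo δ 1)) (Filter.Eventually.of_forall fun s => le_max_right _ _)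
      ((hq_ae.sub aemeasurable_const).max aemeasurable_const)
    rw [hlc]
    refine setLIntegral_congr_fun measurableSet_Ioi
      (fun t ht => ?_)
    rw [Measure.restrict_apply' measurableSet_Ioo]
    congr 2
    ext s
    simp only [mem_setOf_eq, lt_max_iff]
    have ht0 : (0 : ℝ) < t := ht
    constructor
    · rintro (h | h)
      · linarith
      · linarith
    · intro h
      exact Or.inl (by linarith)
  -- layer cake for X
  have hB : ∀ c : ℝ,
      ∫⁻ ω, ENNReal.ofReal (max (X ω - c) 0) ∂P =
        ∫⁻ t in Ioi (0 : ℝ), P {ω | c + t < X ω} := by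
    intro c
    have hlc := lintegral_eq_lintegral_meas_lt (f := fun ω => max (X ω - c) 0)
      P (Filter.Eventually.of_forall fun ω => le_max_right _ _)
      (((hXm.sub measurable_const).max measurable_const).aemeasurable)
    rw [hlc]
    refine setLIntegral_congr_fun measurableSet_Ioi
      (fun t ht => ?_)
    congr 1
    ext ω
    simp only [mem_setOf_eq, lt_max_iff]
    have ht0 : (0 : ℝ) < t := ht
    constructor
    · rintro (h | h)
      · linarith
      · linarith
    · intro h
      exact Or.inl (by linarith)
  -- claim 1 : A(c) ≤ B(c)
  have hAB : ∀ c : ℝ,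
      (∫⁻ t in Ioi (0 : ℝ), volume ({s : ℝ | c + t < VaR P s X} ∩ Ioo δ 1)) ≤
        ∫⁻ t in Ioi (0 : ℝ), P {ω | c + t < X ω} := by
    intro c
    have hae : (fun t : ℝ => P {a | t ≤ X a - c}) =ᵐ[volume]
        fun t : ℝ => P {a | t < X a - c} :=
      meas_le_ae_eq_meas_lt P volume (fun ω => X ω - c)
    calc (∫⁻ t in Ioi (0 : ℝ), volume ({s : ℝ | c + t < VaR P s X} ∩ Ioo δ 1))
        ≤ ∫⁻ t in Ioi (0 : ℝ), P {ω | c + t ≤ X ω} :=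
          lintegral_mono fun t => hvol_le (c + t)
      _ = ∫⁻ t in Ioi (0 : ℝ), P {ω | c + t < X ω} := by
          apply lintegral_congr_ae
          filter_upwards [ae_restrict_of_ae hae] with t h
          have e1 : {a | t ≤ X a - c} = {ω | c + t ≤ X ω} := by
            ext ω; simp only [mem_setOf_eq]; constructor <;> intro <;> linarith
          have e2 : {a | t < X a - c} = {ω | c + t < X ω} := by
            ext ω; simp only [mem_setOf_eq]; constructor <;> intro <;> linarith
          rw [e1, e2] at h
          exact h
  -- claim 2 : B(VaR δ) ≤ A(VaR δ)
  have hBA : (∫⁻ t in Ioi (0 : ℝ), P {ω | VaR P δ X + t < X ω}) ≤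
      ∫⁻ t in Ioi (0 : ℝ), volume ({s : ℝ | VaR P δ X + t < VaR P s X} ∩ Ioo δ 1) := by
    apply lintegral_mono_ae
    filter_upwards [self_mem_ae_restrict measurableSet_Ioi] with t ht
    exact hvol_ge _ (lt_add_of_pos_right _ (mem_Ioi.mp ht))
  -- finiteness
  have hBfin : ∀ c : ℝ, (∫⁻ ω, ENNReal.ofReal (max (X ω - c) 0) ∂P) ≠ ⊤ := by
    intro c
    have hint : Integrable (fun ω => max (X ω - c) 0) P := (hX.sub (integrable_const c)).pos_part
    exact ((hasFiniteIntegral_iff_ofReal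
      (Filter.Eventually.of_forall fun ω => le_max_right _ _)).mp hint.2).ne
  -- the key identity at c = VaR δ
  have key : ∫⁻ s in Ioo δ 1, ENNReal.ofReal (max (VaR P s X - VaR P δ X) 0) =
      ∫⁻ ω, ENNReal.ofReal (max (X ω - VaR P δ X) 0) ∂P := by
    rw [hA, hB]
    exact le_antisymm (hAB _) hBA
  -- integrability of VaR on (δ, 1)
  have hg_nn_ae : 0 ≤ᵐ[volume.restrict (Ioo δ 1)] fun s => VaR P s X - VaR P δ X := by
    filter_upwards [self_mem_ae_restrict measurableSet_Ioo] with s hs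
    exact sub_nonneg.mpr (hq_mono le_rfl hs.1.le hs.2)
  have hlig : ∫⁻ s in Ioo δ 1, ENNReal.ofReal (VaR P s X - VaR P δ X) =
      ∫⁻ ω, ENNReal.ofReal (max (X ω - VaR P δ X) 0) ∂P := by
    rw [← key]
    apply lintegral_congr_ae
    filter_upwards [hg_nn_ae] with s hs
    simp only [Pi.zero_apply] at hs
    rw [max_eq_left hs]
  have hg_int : Integrable (fun s => VaR P s X - VaR P δ X) (volume.restrict (Ioo δ 1)) := by
    constructor
    · exact (hq_ae.sub aemeasurable_const).aestronglyMeasurable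
    · rw [hasFiniteIntegral_iff_ofReal hg_nn_ae, hlig]
      exact (hBfin _).lt_top
  have hq_int : Integrable (fun s => VaR P s X) (volume.restrict (Ioo δ 1)) := by
    have h := hg_int.add (integrable_const (VaR P δ X))
    have he : (fun s => VaR P s X) =
        (fun s => VaR P s X - VaR P δ X) + fun _ => VaR P δ X := by
      funext s; simp
    rw [he]
    exact h
  -- real integral computations
  have hvol1 : (volume (Ioo δ (1 : ℝ))).toReal = 1 - δ := by
    rw [Real.volume_Ioo, ENNReal.toReal_ofReal (by linarith)]
  have hEint : ∀ c : ℝ, ∫ ω, max (X ω - c) 0 ∂P =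
      (∫⁻ ω, ENNReal.ofReal (max (X ω - c) 0) ∂P).toReal := fun c =>
    integral_eq_lintegral_of_nonneg_ae (Filter.Eventually.of_forall fun ω => le_max_right _ _)
      (((hXm.sub measurable_const).max measurable_const).aestronglyMeasurable)
  have hsplit : ∀ c : ℝ, Integrable (fun s => VaR P s X - c) (volume.restrict (Ioo δ 1)) →
      ∫ s in Ioo δ 1, VaR P s X = (∫ s in Ioo δ 1, (VaR P s X - c)) + (1 - δ) * c := by
    intro c hint
    have h1 : ∫ s in Ioo δ 1, VaR P s X = ∫ s in Ioo δ 1, ((VaR P s X - c) + c) := by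
      congr 1; funext s; ring
    rw [h1, integral_add hint (integrable_const c), setIntegral_const, measureReal_def, hvol1, smul_eq_mul]
  -- the value at VaR δ
  have hgval : ∫ s in Ioo δ 1, (VaR P s X - VaR P δ X) = ∫ ω, max (X ω - VaR P δ X) 0 ∂P := by
    rw [integral_eq_lintegral_of_nonneg_ae hg_nn_ae hg_int.1, hlig, hEint]
  have hIoc : ∫ s in Ioc δ 1, VaR P s X = ∫ s in Ioo δ 1, VaR P s X :=
    integral_Ioc_eq_integral_Ioo
  have hCVaR : CVaR P δ X = (1 - δ)⁻¹ *
      ((∫ ω, max (X ω - VaR P δ X) 0 ∂P) + (1 - δ) * VaR P δ X) := by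
    rw [CVaR, hIoc, hsplit (VaR P δ X) hg_int, hgval]
  constructor
  · -- the inequality for every α
    intro α
    have hint_a : Integrable (fun s => VaR P s X - α) (volume.restrict (Ioo δ 1)) :=
      hq_int.sub (integrable_const α)
    have h1 : ∫ s in Ioo δ 1, (VaR P s X - α) ≤ ∫ s in Ioo δ 1, max (VaR P s X - α) 0 :=
      integral_mono hint_a hint_a.pos_part (fun s => le_max_left _ _)
    have h2 : ∫ s in Ioo δ 1, max (VaR P s X - α) 0 =
        (∫⁻ s in Ioo δ 1, ENNReal.ofReal (max (VaR P s X - α) 0)).toReal := by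
      refine integral_eq_lintegral_of_nonneg_ae
        (Filter.Eventually.of_forall fun s => le_max_right _ _) ?_
      exact ((hq_ae.sub aemeasurable_const).max aemeasurable_const).aestronglyMeasurable
    have h3 : (∫⁻ s in Ioo δ 1, ENNReal.ofReal (max (VaR P s X - α) 0)).toReal ≤
        (∫⁻ ω, ENNReal.ofReal (max (X ω - α) 0) ∂P).toReal := by
      apply ENNReal.toReal_mono (hBfin α)
      rw [hA, hB]
      exact hAB α
    have h4 : ∫ s in Ioo δ 1, (VaR P s X - α) ≤ ∫ ω, max (X ω - α) 0 ∂P := by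
      rw [hEint]
      exact le_trans h1 (le_trans (le_of_eq h2) h3)
    have h5 : ∫ s in Ioo δ 1, VaR P s X ≤ (∫ ω, max (X ω - α) 0 ∂P) + (1 - δ) * α := by
      rw [hsplit α hint_a]
      linarith
    rw [CVaR, hIoc]
    have hpos : (0 : ℝ) ≤ (1 - δ)⁻¹ := inv_nonneg.mpr (by linarith)
    calc (1 - δ)⁻¹ * ∫ s in Ioo δ 1, VaR P s X
        ≤ (1 - δ)⁻¹ * ((∫ ω, max (X ω - α) 0 ∂P) + (1 - δ) * α) :=
          mul_le_mul_of_nonneg_left h5 hpos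
      _ = α + (1 - δ)⁻¹ * ∫ ω, max (X ω - α) 0 ∂P := by
          field_simp
          ring
  · -- the equality at VaR δ
    rw [hCVaR]
    field_simp
    ring
end

section
/- Let (x*_VaR, γ*_VaR) be optimal for the VaR-Expectation problem min_{x∈X} VaR_δ(E_{ξ∼F}[H(x,ξ)]) and let (x*_DR, γ*_DR) be optimal for the distributionally robust problem min_{x∈X} max_{F∈F_DR} E_{ξ∼F}[H(x,ξ)], where F_DR satisfies P₁(F ∉ F_DR) ≤ 1-δ. Then γ*_VaR ≤ γ*_DR: the VaR-Expectation model is no more conservative than any distributionally robust model with a fixed distribution set of coverage δ. -/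
open MeasureTheory Set

/-- let `(x*_VaR, γ*_VaR)` be optimal for the VaR-Expectation problem
`min_x VaR_δ(E_{ξ∼F}[H(x,ξ)])` (the randomness being the distribution `F ∼ P₁`) and let
`(x*_DR, γ*_DR)` be optimal for the distributionally robust problem
`min_x sup_{F ∈ F_DR} E_{ξ∼F}[H(x,ξ)]` where the fixed set `F_DR` has coverage `δ`,
i.e. `P₁(F ∉ F_DR) ≤ 1-δ`. Then `γ*_VaR ≤ γ*_DR`: the VaR-Expectation model is no more
conservative than the distributionally robust model. -/
theorem VaR_expectation_less_conservative_than_DRO {n s : ℕ}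
    (P₁ : Measure (Measure (Fin s → ℝ))) [IsProbabilityMeasure P₁]
    (X : Set (Fin n → ℝ)) (H : (Fin n → ℝ) → (Fin s → ℝ) → ℝ)
    (δ : ℝ) (hδ : δ ∈ Set.Ioo (0 : ℝ) 1)
    (FDR : Set (Measure (Fin s → ℝ))) (hFDRne : FDR.Nonempty)
    (hFDRcov : P₁ FDRᶜ ≤ ENNReal.ofReal (1 - δ))
    (xV xDR : Fin n → ℝ) (γV γDR : ℝ)
    (hxV : xV ∈ X) (hγV : γV = VaR P₁ δ (fun F => ∫ ξ, H xV ξ ∂F))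
    (hVopt : ∀ x ∈ X, γV ≤ VaR P₁ δ (fun F => ∫ ξ, H x ξ ∂F))
    (hxDR : xDR ∈ X)
    (hbdd : BddAbove ((fun F => ∫ ξ, H xDR ξ ∂F) '' FDR))
    (hγDR : γDR = sSup ((fun F => ∫ ξ, H xDR ξ ∂F) '' FDR))
    (hDRopt : ∀ x ∈ X, γDR ≤ sSup ((fun F => ∫ ξ, H x ξ ∂F) '' FDR)) :
    γV ≤ γDR := by
  set Z : Measure (Fin s → ℝ) → ℝ := fun F => ∫ ξ, H xDR ξ ∂F with hZ
  set S : Set ℝ := {t : ℝ | P₁ {F | t ≤ Z F} ≤ ENNReal.ofReal (1 - δ)} with hS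
  have hVle : γV ≤ VaR P₁ δ Z := hVopt xDR hxDR
  -- Every t > γDR lies in S
  have hmem : ∀ t : ℝ, γDR < t → t ∈ S := by
    intro t ht
    have hsub : {F | t ≤ Z F} ⊆ FDRᶜ := by
      intro F hF hFDR
      have : Z F ≤ γDR := by
        rw [hγDR]; exact le_csSup hbdd ⟨F, hFDR, rfl⟩
      exact absurd (lt_of_le_of_lt this ht) (not_lt.mpr hF)
    exact le_trans (measure_mono hsub) hFDRcov
  -- S is bounded below
  have hlt : ENNReal.ofReal (1 - δ) < 1 := by
    rw [show (1 : ENNReal) = ENNReal.ofReal 1 by simp]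
    exact (ENNReal.ofReal_lt_ofReal_iff one_pos).mpr (by linarith [hδ.1])
  have hbelow : BddBelow S := by
    -- {F | -n ≤ Z F} increases to univ
    have hU : ⋃ m : ℕ, {F : Measure (Fin s → ℝ) | -(m : ℝ) ≤ Z F} = univ := by
      ext F; simp only [mem_iUnion, mem_univ, iff_true, mem_setOf_eq]
      obtain ⟨m, hm⟩ := exists_nat_ge (-(Z F))
      exact ⟨m, by linarith⟩
    have hmono : Monotone fun m : ℕ => {F : Measure (Fin s → ℝ) | -(m : ℝ) ≤ Z F} := by
      intro a b hab F hF
      simp only [mem_setOf_eq] at *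
      have : -(b : ℝ) ≤ -(a : ℝ) := by exact_mod_cast neg_le_neg (Nat.cast_le.mpr hab)
      linarith
    have hsup : (⨆ m : ℕ, P₁ {F : Measure (Fin s → ℝ) | -(m : ℝ) ≤ Z F}) = 1 := by
      rw [← Directed.measure_iUnion hmono.directed_le, hU, measure_univ]
    have : ∃ m : ℕ, ENNReal.ofReal (1 - δ) < P₁ {F : Measure (Fin s → ℝ) | -(m : ℝ) ≤ Z F} := by
      by_contra h
      push_neg at h
      have := iSup_le h
      rw [hsup] at this
      exact absurd this (not_le.mpr hlt)
    obtain ⟨m, hm⟩ := this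
    refine ⟨-(m : ℝ), fun t ht => ?_⟩
    by_contra hlt'
    push_neg at hlt'
    have hsub : {F : Measure (Fin s → ℝ) | -(m : ℝ) ≤ Z F} ⊆ {F | t ≤ Z F} := by
      intro F hF; simp only [mem_setOf_eq] at *; linarith
    exact absurd (le_trans (measure_mono hsub) ht) (not_le.mpr hm)
  -- conclude
  have hVaR : VaR P₁ δ Z ≤ γDR := by
    have : ∀ ε > 0, VaR P₁ δ Z ≤ γDR + ε := fun ε hε =>
      csInf_le hbelow (hmem _ (by linarith))
    exact le_of_forall_pos_le_add this
  linarith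
end

section
/- For any random variable Z with distribution P₁ and δ ∈ (0,1), VaR_δ(Z) = inf over measurable sets A with P₁(A^c) ≤ 1-δ of the essential supremum of Z on A (assuming Z restricted to A is bounded above). In particular, VaR_δ(Z) ≤ sup_{ω∈A} Z(ω) for any set A with P₁(A^c) ≤ 1-δ. -/
open MeasureTheory Set

lemma VaR_set_bddBelow {Ω : Type*} [MeasurableSpace Ω]
    (P₁ : Measure Ω) [IsProbabilityMeasure P₁] (Z : Ω → ℝ) (hZm : Measurable Z)
    (δ : ℝ) (hδ : δ ∈ Set.Ioo (0 : ℝ) 1) :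
    BddBelow {t : ℝ | P₁ {ω | t ≤ Z ω} ≤ ENNReal.ofReal (1 - δ)} := by
  have hlt : ENNReal.ofReal (1 - δ) < 1 := by
    rw [ENNReal.ofReal_lt_one]; linarith [hδ.1]
  have hmono : Monotone (fun n : ℕ => {ω | (-(n:ℝ)) ≤ Z ω}) := by
    intro m n hmn ω hω
    simp only [mem_setOf_eq] at *
    have : (-(n:ℝ)) ≤ -(m:ℝ) := by
      simp only [neg_le_neg_iff]; exact_mod_cast hmn
    linarith
  have hunion : (⋃ n : ℕ, {ω | (-(n:ℝ)) ≤ Z ω}) = univ := by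
    ext ω; simp only [mem_iUnion, mem_setOf_eq, mem_univ, iff_true]
    obtain ⟨n, hn⟩ := exists_nat_ge (-(Z ω))
    exact ⟨n, by linarith⟩
  have htend : Filter.Tendsto (fun n : ℕ => P₁ {ω | (-(n:ℝ)) ≤ Z ω})
      Filter.atTop (nhds 1) := by
    have := tendsto_measure_iUnion_atTop (μ := P₁) hmono
    rwa [hunion, measure_univ] at this
  have : ∀ᶠ n : ℕ in Filter.atTop,
      ENNReal.ofReal (1 - δ) < P₁ {ω | (-(n:ℝ)) ≤ Z ω} :=
    htend.eventually_const_lt hlt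
  obtain ⟨n, hn⟩ := this.exists
  refine ⟨-(n:ℝ), fun t ht => ?_⟩
  by_contra hlt'
  push_neg at hlt'
  have hsub : {ω | (-(n:ℝ)) ≤ Z ω} ⊆ {ω | t ≤ Z ω} := by
    intro ω hω; simp only [mem_setOf_eq] at *; linarith
  exact absurd (le_trans (measure_mono hsub) ht) (not_le.mpr hn)

lemma VaR_set_nonempty {Ω : Type*} [MeasurableSpace Ω]
    (P₁ : Measure Ω) [IsProbabilityMeasure P₁] (Z : Ω → ℝ) (hZm : Measurable Z)
    (δ : ℝ) (hδ : δ ∈ Set.Ioo (0 : ℝ) 1) :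
    {t : ℝ | P₁ {ω | t ≤ Z ω} ≤ ENNReal.ofReal (1 - δ)}.Nonempty := by
  have hpos : 0 < ENNReal.ofReal (1 - δ) := ENNReal.ofReal_pos.mpr (by linarith [hδ.2])
  have hanti : Antitone (fun n : ℕ => {ω | ((n:ℝ)) ≤ Z ω}) := by
    intro m n hmn ω hω
    simp only [mem_setOf_eq] at *
    have : (m:ℝ) ≤ (n:ℝ) := by exact_mod_cast hmn
    linarith
  have hinter : (⋂ n : ℕ, {ω | ((n:ℝ)) ≤ Z ω}) = (∅ : Set Ω) := by
    ext ω; simp only [mem_iInter, mem_setOf_eq, mem_empty_iff_false, iff_false]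
    push_neg
    obtain ⟨n, hn⟩ := exists_nat_gt (Z ω)
    exact ⟨n, hn⟩
  have htend : Filter.Tendsto (fun n : ℕ => P₁ {ω | ((n:ℝ)) ≤ Z ω})
      Filter.atTop (nhds 0) := by
    have h := tendsto_measure_iInter_atTop (μ := P₁)
      (fun n => (hZm measurableSet_Ici).nullMeasurableSet) hanti
      ⟨0, measure_ne_top _ _⟩
    have heq : (⋂ n : ℕ, Z ⁻¹' Ici ((n:ℝ))) = (∅ : Set Ω) := hinter
    rw [heq, measure_empty] at h
    exact h
  have : ∀ᶠ n : ℕ in Filter.atTop,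
      P₁ {ω | ((n:ℝ)) ≤ Z ω} < ENNReal.ofReal (1 - δ) :=
    htend.eventually_lt_const hpos
  obtain ⟨n, hn⟩ := this.exists
  exact ⟨(n:ℝ), hn.le⟩

lemma VaR_le_sSup {Ω : Type*} [MeasurableSpace Ω]
    (P₁ : Measure Ω) [IsProbabilityMeasure P₁] (Z : Ω → ℝ) (hZm : Measurable Z)
    (δ : ℝ) (hδ : δ ∈ Set.Ioo (0 : ℝ) 1)
    (A : Set Ω) (hA : MeasurableSet A) (hAc : P₁ Aᶜ ≤ ENNReal.ofReal (1 - δ))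
    (hne : A.Nonempty) (hbdd : BddAbove (Z '' A)) :
    VaR P₁ δ Z ≤ sSup (Z '' A) := by
  set M := sSup (Z '' A) with hM
  refine le_of_forall_gt_imp_ge_of_dense fun t ht => ?_
  have hsub : {ω | t ≤ Z ω} ⊆ Aᶜ := by
    intro ω hω
    simp only [mem_setOf_eq] at hω
    intro hωA
    have : Z ω ≤ M := le_csSup hbdd ⟨ω, hωA, rfl⟩
    linarith
  have htS : P₁ {ω | t ≤ Z ω} ≤ ENNReal.ofReal (1 - δ) :=
    le_trans (measure_mono hsub) hAc
  exact csInf_le (VaR_set_bddBelow P₁ Z hZm δ hδ) htS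

/-- `VaR_δ(Z)` equals the infimum, over measurable sets `A` with
`P₁(Aᶜ) ≤ 1-δ` on which `Z` is bounded above, of the supremum of `Z` on `A`; in
particular `VaR_δ(Z) ≤ sup_{ω∈A} Z(ω)` for any such set `A`. -/
theorem VaR_eq_inf_sup_over_coverage_sets {Ω : Type*} [MeasurableSpace Ω]
    (P₁ : Measure Ω) [IsProbabilityMeasure P₁] (Z : Ω → ℝ) (hZm : Measurable Z)
    (δ : ℝ) (hδ : δ ∈ Set.Ioo (0 : ℝ) 1) :
    VaR P₁ δ Z = sInf {r : ℝ | ∃ A : Set Ω, MeasurableSet A ∧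
        P₁ Aᶜ ≤ ENNReal.ofReal (1 - δ) ∧ A.Nonempty ∧ BddAbove (Z '' A) ∧
        r = sSup (Z '' A)} ∧
      ∀ A : Set Ω, MeasurableSet A → P₁ Aᶜ ≤ ENNReal.ofReal (1 - δ) → A.Nonempty →
        BddAbove (Z '' A) → VaR P₁ δ Z ≤ sSup (Z '' A) := by
  set S := {t : ℝ | P₁ {ω | t ≤ Z ω} ≤ ENNReal.ofReal (1 - δ)} with hS
  set T := {r : ℝ | ∃ A : Set Ω, MeasurableSet A ∧
        P₁ Aᶜ ≤ ENNReal.ofReal (1 - δ) ∧ A.Nonempty ∧ BddAbove (Z '' A) ∧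
        r = sSup (Z '' A)} with hT
  have hlt1 : ENNReal.ofReal (1 - δ) < 1 := by
    rw [ENNReal.ofReal_lt_one]; linarith [hδ.1]
  -- For each t ∈ S, the set A = {Z < t} works
  have hconstruct : ∀ t ∈ S, ∃ r ∈ T, r ≤ t := by
    intro t ht
    set A := {ω | Z ω < t} with hA
    have hAm : MeasurableSet A := measurableSet_lt hZm measurable_const
    have hAcomp : Aᶜ = {ω | t ≤ Z ω} := by
      ext ω; simp [hA, not_lt]
    have hAc : P₁ Aᶜ ≤ ENNReal.ofReal (1 - δ) := by rw [hAcomp]; exact ht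
    have hAne : A.Nonempty := by
      by_contra h
      rw [not_nonempty_iff_eq_empty] at h
      have : Aᶜ = univ := by rw [h, compl_empty]
      rw [this, measure_univ] at hAc
      exact absurd hAc (not_le.mpr hlt1)
    have hbdd : BddAbove (Z '' A) := by
      refine ⟨t, fun x hx => ?_⟩
      obtain ⟨ω, hω, rfl⟩ := hx
      exact le_of_lt hω
    refine ⟨sSup (Z '' A), ⟨A, hAm, hAc, hAne, hbdd, rfl⟩, ?_⟩
    exact csSup_le (hAne.image Z) fun x hx => by
      obtain ⟨ω, hω, rfl⟩ := hx; exact le_of_lt hω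
  have part2 : ∀ A : Set Ω, MeasurableSet A → P₁ Aᶜ ≤ ENNReal.ofReal (1 - δ) →
      A.Nonempty → BddAbove (Z '' A) → VaR P₁ δ Z ≤ sSup (Z '' A) :=
    fun A hA hAc hne hbdd => VaR_le_sSup P₁ Z hZm δ hδ A hA hAc hne hbdd
  have hTne : T.Nonempty := by
    obtain ⟨t, ht⟩ := VaR_set_nonempty P₁ Z hZm δ hδ
    obtain ⟨r, hr, _⟩ := hconstruct t ht
    exact ⟨r, hr⟩
  have hTbdd : BddBelow T := by
    refine ⟨VaR P₁ δ Z, fun r hr => ?_⟩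
    obtain ⟨A, hA, hAc, hne, hbdd, rfl⟩ := hr
    exact part2 A hA hAc hne hbdd
  constructor
  · apply le_antisymm
    · refine le_csInf hTne fun r hr => ?_
      obtain ⟨A, hA, hAc, hne, hbdd, rfl⟩ := hr
      exact part2 A hA hAc hne hbdd
    · refine le_csInf (VaR_set_nonempty P₁ Z hZm δ hδ) fun t ht => ?_
      obtain ⟨r, hr, hrt⟩ := hconstruct t ht
      exact le_trans (csInf_le hTbdd hr) hrt
  · exact part2
end
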